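/- Let T be a finite set, D₁,...,D_K : T → ℝ nonnegative, c^k_max > 0, R : T → ℝ, and Π a nonempty finite set of pmfs containing a worst-case-feasible Q₀ (supported on ∩_k {D_k ≤ c^k_max}). Given risk levels α_k ∈ (0,1), if λ_k ≥ (Ψ* − Ψ̄)/(α_k·c^k_max) for each k, then any maximizer P* of J(P) = ∑ P(τ)R(τ) − ∑_k λ_k ∑_{τ : D_k(τ) > c^k_max} P(τ)D_k(τ) satisfies P*({τ : D_k(τ) > c^k_max}) ≤ α_k for every k. -/

import Mathlib

open Finset Filter

theorem stmt15 {T : Type*} [Fintype T] {K : ℕ}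
    (R : T → ℝ) (D : Fin K → T → ℝ) (hD : ∀ k τ, 0 ≤ D k τ)
    (cmax : Fin K → ℝ) (hc : ∀ k, 0 < cmax k)
    (α : Fin K → ℝ) (hα0 : ∀ k, 0 < α k) (hα1 : ∀ k, α k < 1)
    (lam : Fin K → ℝ) (hlam : ∀ k, 0 < lam k)
    (Pol : Finset (T → ℝ)) (hne : Pol.Nonempty)
    (hpmf : ∀ P ∈ Pol, (∀ τ, 0 ≤ P τ) ∧ ∑ τ, P τ = 1)
    (Q₀ : T → ℝ) (hQ₀ : Q₀ ∈ Pol)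
    (hQ₀supp : ∀ τ, (∃ k, cmax k < D k τ) → Q₀ τ = 0)
    (Ψs : ℝ) (hΨs : IsGreatest {x : ℝ | ∃ P ∈ Pol, x = ∑ τ, P τ * R τ} Ψs)
    (Ψb : ℝ) (hΨb : Ψb = ∑ τ, Q₀ τ * R τ)
    (hlamLB : ∀ k, (Ψs - Ψb) / (α k * cmax k) ≤ lam k)
    (Pstar : T → ℝ) (hmem : Pstar ∈ Pol)
    (hopt : ∀ Q ∈ Pol,
      (∑ τ, Q τ * R τ) - ∑ k, lam k * ∑ τ ∈ Finset.univ.filter (fun τ => cmax k < D k τ), Q τ * D k τ ≤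
      (∑ τ, Pstar τ * R τ) - ∑ k, lam k * ∑ τ ∈ Finset.univ.filter (fun τ => cmax k < D k τ), Pstar τ * D k τ) :
    ∀ k, ∑ τ ∈ Finset.univ.filter (fun τ => cmax k < D k τ), Pstar τ ≤ α k := by
  intro k
  set pen : Fin K → ℝ := fun k =>
    ∑ τ ∈ Finset.univ.filter (fun τ => cmax k < D k τ), Pstar τ * D k τ with hpen
  have hPnonneg := (hpmf Pstar hmem).1
  -- each penalty is nonnegative
  have hpen_nonneg : ∀ j, 0 ≤ pen j := fun j =>
    Finset.sum_nonneg fun τ _ => mul_nonneg (hPnonneg τ) (hD j τ)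
  -- Q₀'s penalties are zero
  have hQ0pen : ∀ j, ∑ τ ∈ Finset.univ.filter (fun τ => cmax j < D j τ), Q₀ τ * D j τ = 0 := by
    intro j
    apply Finset.sum_eq_zero
    intro τ hτ
    rw [hQ₀supp τ ⟨j, (Finset.mem_filter.mp hτ).2⟩, zero_mul]
  have hJ := hopt Q₀ hQ₀
  simp only [hQ0pen, mul_zero, Finset.sum_const_zero, sub_zero] at hJ
  have hPR : ∑ τ, Pstar τ * R τ ≤ Ψs := hΨs.2 ⟨Pstar, hmem, rfl⟩
  -- total penalty bound
  have hsum : ∑ j, lam j * pen j ≤ Ψs - Ψb := by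
    rw [hΨb]
    linarith [hJ, hPR]
  have hk : lam k * pen k ≤ Ψs - Ψb := by
    calc lam k * pen k ≤ ∑ j, lam j * pen j :=
          Finset.single_le_sum (f := fun j => lam j * pen j)
            (fun j _ => mul_nonneg (hlam j).le (hpen_nonneg j)) (Finset.mem_univ k)
      _ ≤ Ψs - Ψb := hsum
  -- pen k ≥ cmax k * P*(set)
  have hlow : cmax k * ∑ τ ∈ Finset.univ.filter (fun τ => cmax k < D k τ), Pstar τ ≤ pen k := by
    rw [Finset.mul_sum]
    apply Finset.sum_le_sum
    intro τ hτ
    rw [mul_comm]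
    exact mul_le_mul_of_nonneg_left (le_of_lt (Finset.mem_filter.mp hτ).2) (hPnonneg τ)
  have hac : 0 < α k * cmax k := mul_pos (hα0 k) (hc k)
  have hΨ : Ψs - Ψb ≤ lam k * (α k * cmax k) := by
    have := hlamLB k
    rw [div_le_iff₀ hac] at this
    linarith
  have hfinal : lam k * (cmax k * ∑ τ ∈ Finset.univ.filter (fun τ => cmax k < D k τ), Pstar τ)
      ≤ lam k * (α k * cmax k) := by
    calc lam k * (cmax k * ∑ τ ∈ Finset.univ.filter (fun τ => cmax k < D k τ), Pstar τ)
        ≤ lam k * pen k := mul_le_mul_of_nonneg_left hlow (hlam k).le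
      _ ≤ Ψs - Ψb := hk
      _ ≤ _ := hΨ
    
  have := le_of_mul_le_mul_left hfinal (hlam k)
  rw [mul_comm (α k) (cmax k)] at this
  exact le_of_mul_le_mul_left this (hc k)
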